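/- arXiv:1203.5625 — 4 statements merged into one kernel-verified Lean document; each statement's English description precedes it below -/
import Mathlib

section
/- Every set E of simple maps that is totally bounded with respect to the pseudometric d(s,t) = ∫ ‖s − t‖ is elementary: for every ε > 0 there exists δ > 0 such that ∫ ‖s‖ 1_A < ε for all s ∈ E and all measurable A with μ(A) < δ. -/
open MeasureTheory

/-- A set `C` of simple maps is elementary iff for every `ε > 0` there is
`δ > 0` such that `∫ ‖s‖ 1_A < ε` whenever `s ∈ C` and `μ A < δ`. -/
def Elementary {Ω E : Type*} [MeasurableSpace Ω] [NormedAddCommGroup E]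
    (μ : Measure Ω) (C : Set (SimpleFunc Ω E)) : Prop :=
  ∀ ε > (0 : ℝ), ∃ δ > (0 : ℝ), ∀ s ∈ C, ∀ A : Set Ω, MeasurableSet A →
    μ A < ENNReal.ofReal δ → ∫ x in A, ‖s x‖ ∂μ < ε

/-- Every set of simple maps which is totally bounded for the pseudometric
`d(s,t) = ∫ ‖s − t‖` is elementary. -/
theorem stmt7 {Ω E : Type*} [MeasurableSpace Ω] (μ : Measure Ω)
    [IsFiniteMeasure μ] [NormedAddCommGroup E] [NormedSpace ℂ E]
    [CompleteSpace E] [TopologicalSpace.SeparableSpace E]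
    (C : Set (SimpleFunc Ω E))
    (htb : ∀ ε > (0 : ℝ), ∃ T : Set (SimpleFunc Ω E), T.Finite ∧
      ∀ s ∈ C, ∃ t ∈ T, ∫ x, ‖s x - t x‖ ∂μ ≤ ε) :
    Elementary μ C := by
  intro ε hε
  obtain ⟨T, hTfin, hTnet⟩ := htb (ε/3) (by positivity)
  have hbound : ∀ t : SimpleFunc Ω E, ∃ M, ∀ x, ‖t x‖ ≤ M := fun t =>
    t.exists_forall_norm_le
  choose Mf hMf using hbound
  obtain ⟨M0, hM0⟩ : ∃ M0, ∀ t ∈ T, Mf t ≤ M0 := by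
    obtain ⟨M0, hM0⟩ := (hTfin.image Mf).bddAbove
    exact ⟨M0, fun t ht => hM0 ⟨t, ht, rfl⟩⟩
  set M : ℝ := max M0 1 with hM
  have hMpos : 0 < M := lt_of_lt_of_le one_pos (le_max_right _ _)
  refine ⟨ε / (3 * M), by positivity, fun s hs A hA hμA => ?_⟩
  obtain ⟨t, htT, hst⟩ := hTnet s hs
  have hsint : Integrable s μ := s.integrable_of_isFiniteMeasure
  have htint : Integrable t μ := t.integrable_of_isFiniteMeasure
  have hdiff : Integrable (fun x => ‖s x - t x‖) μ := (hsint.sub htint).norm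
  have hμAfin : μ A < ⊤ := lt_of_lt_of_le hμA le_top
  -- step 1: triangle inequality
  have h1 : ∫ x in A, ‖s x‖ ∂μ ≤ (∫ x in A, ‖s x - t x‖ ∂μ) + ∫ x in A, ‖t x‖ ∂μ := by
    rw [← integral_add hdiff.integrableOn htint.norm.integrableOn]
    refine setIntegral_mono_on hsint.norm.integrableOn
      (hdiff.integrableOn.add htint.norm.integrableOn) hA (fun x _ => ?_)
    calc ‖s x‖ ≤ ‖t x‖ + ‖s x - t x‖ := norm_le_norm_add_norm_sub' (s x) (t x)
      _ = ‖s x - t x‖ + ‖t x‖ := add_comm _ _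
  have h2 : ∫ x in A, ‖s x - t x‖ ∂μ ≤ ε / 3 :=
    le_trans (setIntegral_le_integral hdiff
      (Filter.Eventually.of_forall fun x => norm_nonneg _)) hst
  have h3 : ∫ x in A, ‖t x‖ ∂μ ≤ M * (μ A).toReal := by
    have := norm_setIntegral_le_of_norm_le_const (μ := μ) (s := A)
      (f := fun x => ‖t x‖) (C := M) hμAfin
      (fun x _ => by simp only [norm_norm]; exact le_trans (hMf t x) (le_trans (hM0 t htT) (le_max_left M0 1)))
    calc ∫ x in A, ‖t x‖ ∂μ ≤ ‖∫ x in A, ‖t x‖ ∂μ‖ := le_abs_self _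
      _ ≤ M * (μ A).toReal := this
  have h4 : M * (μ A).toReal < ε / 3 := by
    have := ENNReal.toReal_lt_of_lt_ofReal hμA
    calc M * (μ A).toReal < M * (ε / (3 * M)) := by
          exact mul_lt_mul_of_pos_left this hMpos
      _ = ε / 3 := by field_simp
  linarith
end

section
/- On every elementary set of simple maps, the uniformity of convergence in measure coincides with the uniformity induced by d(s,t) = ∫ ‖s − t‖; the key estimate is ∫ ‖s − t‖ ≤ ε μ(Ω) + ∫ ‖s − t‖ 1_{{‖s−t‖ ≥ ε}} for all ε > 0. -/
open MeasureTheory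

lemma meas_set_st {Ω E : Type*} [MeasurableSpace Ω] [NormedAddCommGroup E]
    (s t : SimpleFunc Ω E) (ε : ℝ) : MeasurableSet {x | ε ≤ ‖s x - t x‖} := by
  have : {x | ε ≤ ‖s x - t x‖} = {x | ε ≤ ((s - t).map norm) x} := rfl
  rw [this]
  exact measurableSet_le measurable_const ((s - t).map norm).measurable

lemma key_est {Ω E : Type*} [MeasurableSpace Ω] (μ : Measure Ω)
    [IsFiniteMeasure μ] [NormedAddCommGroup E]
    (s t : SimpleFunc Ω E) (ε : ℝ) (hε : 0 < ε) :
    ∫ x, ‖s x - t x‖ ∂μ ≤ ε * (μ Set.univ).toReal +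
      ∫ x in {x | ε ≤ ‖s x - t x‖}, ‖s x - t x‖ ∂μ := by
  have hfi : Integrable (fun x => ‖s x - t x‖) μ := by
    simpa [Function.comp_def] using SimpleFunc.integrable_of_isFiniteMeasure ((s - t).map norm)
  have hA : MeasurableSet {x | ε ≤ ‖s x - t x‖} := meas_set_st s t ε
  have hsplit : ∫ x, ‖s x - t x‖ ∂μ =
      (∫ x in {x | ε ≤ ‖s x - t x‖}, ‖s x - t x‖ ∂μ) +
      ∫ x in {x | ε ≤ ‖s x - t x‖}ᶜ, ‖s x - t x‖ ∂μ := by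
    have := integral_add_compl hA hfi
    linarith [this]
  rw [hsplit]
  have hcompl : ∫ x in {x | ε ≤ ‖s x - t x‖}ᶜ, ‖s x - t x‖ ∂μ ≤ ε * (μ Set.univ).toReal := by
    have h1 : ∫ x in {x | ε ≤ ‖s x - t x‖}ᶜ, ‖s x - t x‖ ∂μ ≤
        ∫ _x in {x | ε ≤ ‖s x - t x‖}ᶜ, ε ∂μ := by
      apply setIntegral_mono_on hfi.integrableOn
        (integrableOn_const (measure_ne_top μ _) (by simp)) hA.compl
      intro x hx
      simp only [Set.mem_compl_iff, Set.mem_setOf_eq, not_le] at hx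
      exact hx.le
    have h2 : ∫ _x in {x | ε ≤ ‖s x - t x‖}ᶜ, ε ∂μ = (μ {x | ε ≤ ‖s x - t x‖}ᶜ).toReal * ε := by
      simp [setIntegral_const, Measure.real]
    have h3 : (μ {x | ε ≤ ‖s x - t x‖}ᶜ).toReal ≤ (μ Set.univ).toReal :=
      ENNReal.toReal_mono (measure_ne_top μ _) (measure_mono (Set.subset_univ _))
    calc _ ≤ (μ {x | ε ≤ ‖s x - t x‖}ᶜ).toReal * ε := by rw [← h2]; exact h1
      _ ≤ ε * (μ Set.univ).toReal := by nlinarith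
  linarith

/-- On an elementary set, the uniformity of convergence in measure coincides
with the `L¹` uniformity (rendered in ε-δ form); the key estimate is
`∫ ‖s − t‖ ≤ ε μ(Ω) + ∫_{‖s−t‖ ≥ ε} ‖s − t‖`. -/
theorem stmt10 {Ω E : Type*} [MeasurableSpace Ω] (μ : Measure Ω)
    [IsFiniteMeasure μ] [NormedAddCommGroup E] [NormedSpace ℂ E]
    [CompleteSpace E] [TopologicalSpace.SeparableSpace E] :
    (∀ s t : SimpleFunc Ω E, ∀ ε > (0 : ℝ),
      ∫ x, ‖s x - t x‖ ∂μ ≤ ε * (μ Set.univ).toReal +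
        ∫ x in {x | ε ≤ ‖s x - t x‖}, ‖s x - t x‖ ∂μ) ∧
    (∀ C : Set (SimpleFunc Ω E), Elementary μ C →
      ∀ ε > (0 : ℝ), ∃ δ > (0 : ℝ), ∀ s ∈ C, ∀ t ∈ C,
        μ {x | δ ≤ ‖s x - t x‖} < ENNReal.ofReal δ →
        ∫ x, ‖s x - t x‖ ∂μ < ε) := by
  constructor
  · intro s t ε hε
    exact key_est μ s t ε hε
  · intro C hC ε hε
    obtain ⟨δ₁, hδ₁, h1⟩ := hC (ε / 4) (by linarith)
    set M := (μ Set.univ).toReal with hM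
    have hM0 : 0 ≤ M := ENNReal.toReal_nonneg
    set δ := min δ₁ (ε / (2 * (M + 1))) with hδdef
    have hδpos : 0 < δ := lt_min hδ₁ (by positivity)
    refine ⟨δ, hδpos, ?_⟩
    intro s hs t ht hmeas
    set A := {x | δ ≤ ‖s x - t x‖} with hAdef
    have hAm : MeasurableSet A := meas_set_st s t δ
    have hμA : μ A < ENNReal.ofReal δ₁ :=
      lt_of_lt_of_le hmeas (ENNReal.ofReal_le_ofReal (min_le_left _ _))
    have hs' := h1 s hs A hAm hμA
    have ht' := h1 t ht A hAm hμA
    have hsi : Integrable (fun x => ‖s x‖) μ := by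
      simpa [Function.comp_def] using SimpleFunc.integrable_of_isFiniteMeasure (s.map norm)
    have hti : Integrable (fun x => ‖t x‖) μ := by
      simpa [Function.comp_def] using SimpleFunc.integrable_of_isFiniteMeasure (t.map norm)
    have hsti : Integrable (fun x => ‖s x - t x‖) μ := by
      simpa [Function.comp_def] using SimpleFunc.integrable_of_isFiniteMeasure ((s - t).map norm)
    have hsum : ∫ x in A, ‖s x - t x‖ ∂μ ≤ (∫ x in A, ‖s x‖ ∂μ) + ∫ x in A, ‖t x‖ ∂μ := by
      rw [← integral_add hsi.integrableOn hti.integrableOn]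
      apply setIntegral_mono_on hsti.integrableOn
        (hsi.integrableOn.add hti.integrableOn) hAm
      intro x _
      exact norm_sub_le _ _
    have hkey := key_est μ s t δ hδpos
    have hδM : δ * M < ε / 2 := by
      have hδle : δ ≤ ε / (2 * (M + 1)) := min_le_right _ _
      have : δ * M ≤ ε / (2 * (M + 1)) * M := by nlinarith
      have h2 : ε / (2 * (M + 1)) * M < ε / 2 := by
        rw [div_mul_eq_mul_div, div_lt_div_iff₀ (by positivity) (by norm_num)]
        nlinarith
      linarith
    calc ∫ x, ‖s x - t x‖ ∂μ ≤ δ * M + ∫ x in A, ‖s x - t x‖ ∂μ := hkey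
      _ ≤ δ * M + ((∫ x in A, ‖s x‖ ∂μ) + ∫ x in A, ‖t x‖ ∂μ) := by linarith
      _ < ε / 2 + (ε / 4 + ε / 4) := by linarith
      _ = ε := by ring
end

section
/- The integral map ∫ : S(Ω,E) → E is uniformly continuous on every elementary set with respect to the uniformity of convergence in measure. -/
open MeasureTheory

/-- The integral of simple maps is uniformly continuous on every elementary
set with respect to the uniformity of convergence in measure (ε-δ form). -/
theorem stmt11 {Ω E : Type*} [MeasurableSpace Ω] (μ : Measure Ω)
    [IsFiniteMeasure μ] [NormedAddCommGroup E] [NormedSpace ℂ E]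
    [CompleteSpace E] [TopologicalSpace.SeparableSpace E]
    (C : Set (SimpleFunc Ω E)) (hC : Elementary μ C) :
    ∀ ε > (0 : ℝ), ∃ δ > (0 : ℝ), ∀ s ∈ C, ∀ t ∈ C,
      μ {x | δ ≤ ‖s x - t x‖} < ENNReal.ofReal δ →
      ‖s.integral μ - t.integral μ‖ < ε := by
  intro ε hε
  obtain ⟨δ₁, hδ₁, h₁⟩ := hC (ε / 4) (by linarith)
  set M : ℝ := (μ Set.univ).toReal with hM
  have hM0 : 0 ≤ M := ENNReal.toReal_nonneg
  set δ : ℝ := min δ₁ (ε / (2 * (M + 1))) with hδdef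
  have hδpos : 0 < δ := lt_min hδ₁ (by positivity)
  refine ⟨δ, hδpos, ?_⟩
  intro s hs t ht hμ
  set A : Set Ω := {x | δ ≤ ‖s x - t x‖} with hA
  have hAmeas : MeasurableSet A := by
    have : A = (SimpleFunc.map norm (s - t)) ⁻¹' (Set.Ici δ) := rfl
    rw [this]
    exact SimpleFunc.measurableSet_preimage _ _
  have hμA1 : μ A < ENNReal.ofReal δ₁ :=
    lt_of_lt_of_le hμ (ENNReal.ofReal_le_ofReal (min_le_left _ _))
  have hsint : Integrable s μ := SimpleFunc.integrable_of_isFiniteMeasure s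
  have htint : Integrable t μ := SimpleFunc.integrable_of_isFiniteMeasure t
  have hstint : Integrable (fun x => s x - t x) μ := hsint.sub htint
  have hnormint : Integrable (fun x => ‖s x - t x‖) μ := hstint.norm
  -- rewrite simple-func integrals as Bochner integrals
  rw [SimpleFunc.integral_eq_integral s hsint, SimpleFunc.integral_eq_integral t htint,
    ← integral_sub hsint htint]
  have hnorm : ‖∫ x, (s x - t x) ∂μ‖ ≤ ∫ x, ‖s x - t x‖ ∂μ :=
    norm_integral_le_integral_norm _
  have hsplit : ∫ x, ‖s x - t x‖ ∂μ
      = (∫ x in A, ‖s x - t x‖ ∂μ) + ∫ x in Aᶜ, ‖s x - t x‖ ∂μ :=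
    (integral_add_compl hAmeas hnormint).symm
  have hOnA : ∫ x in A, ‖s x - t x‖ ∂μ < ε / 4 + ε / 4 := by
    have h1 : ∫ x in A, ‖s x - t x‖ ∂μ ≤ ∫ x in A, (‖s x‖ + ‖t x‖) ∂μ := by
      refine integral_mono (hnormint.restrict) ((hsint.norm.add htint.norm).restrict) ?_
      intro x; exact norm_sub_le _ _
    have h2 : ∫ x in A, (‖s x‖ + ‖t x‖) ∂μ
        = (∫ x in A, ‖s x‖ ∂μ) + ∫ x in A, ‖t x‖ ∂μ :=
      integral_add (hsint.norm.restrict) (htint.norm.restrict)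
    have h3 := h₁ s hs A hAmeas hμA1
    have h4 := h₁ t ht A hAmeas hμA1
    calc ∫ x in A, ‖s x - t x‖ ∂μ ≤ (∫ x in A, ‖s x‖ ∂μ) + ∫ x in A, ‖t x‖ ∂μ := by
          rw [← h2]; exact h1
      _ < ε / 4 + ε / 4 := by linarith
  have hOnAc : ∫ x in Aᶜ, ‖s x - t x‖ ∂μ ≤ δ * M := by
    have hle : ∀ x ∈ Aᶜ, ‖s x - t x‖ ≤ δ := by
      intro x hx
      simp only [hA, Set.mem_compl_iff, Set.mem_setOf_eq, not_le] at hx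
      exact hx.le
    calc ∫ x in Aᶜ, ‖s x - t x‖ ∂μ
        ≤ δ * (μ Aᶜ).toReal := by
          refine le_trans (le_abs_self _) ?_
          rw [← Real.norm_eq_abs]
          refine norm_setIntegral_le_of_norm_le_const ?_ ?_
          · exact lt_of_le_of_lt (measure_mono (Set.subset_univ _)) (measure_lt_top μ _)
          · intro x hx; rw [Real.norm_eq_abs, abs_of_nonneg (norm_nonneg _)]
            exact hle x hx
      _ ≤ δ * M := by
          refine mul_le_mul_of_nonneg_left ?_ hδpos.le
          exact ENNReal.toReal_mono (measure_ne_top μ _) (measure_mono (Set.subset_univ _))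
  have hδM : δ * M < ε / 2 := by
    have : δ ≤ ε / (2 * (M + 1)) := min_le_right _ _
    have h5 : δ * M ≤ ε / (2 * (M + 1)) * M :=
      mul_le_mul_of_nonneg_right this hM0
    have h6 : ε / (2 * (M + 1)) * M < ε / 2 := by
      rw [div_mul_eq_mul_div, div_lt_div_iff₀ (by positivity) (by norm_num)]
      ring_nf
      nlinarith
    linarith
  calc ‖∫ x, (s x - t x) ∂μ‖ ≤ ∫ x, ‖s x - t x‖ ∂μ := hnorm
    _ = _ := hsplit
    _ < ε / 4 + ε / 4 + ε / 2 := by linarith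
    _ = ε := by ring
end

section
/- Define L(Ω,E) as the union of the closures in measure of all elementary sets of simple maps. Then L(Ω,E) is a vector space containing S(Ω,E), and there is a unique linear extension of the simple-map integral to L(Ω,E) that is uniformly continuous (for convergence in measure) on the closure of every elementary set. -/
open MeasureTheory Filter Topology
open scoped ENNReal

/-- `f` is (Lebesgue) integrable, i.e. belongs to `L(Ω,E)`, iff it lies in the
closure in measure of some elementary set of simple maps. -/
def MemL {Ω E : Type*} [MeasurableSpace Ω] [NormedAddCommGroup E]
    (μ : Measure Ω) (f : Ω → E) : Prop :=
  ∃ C : Set (SimpleFunc Ω E), Elementary μ C ∧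
    ∃ s : ℕ → SimpleFunc Ω E, (∀ n, s n ∈ C) ∧
      TendstoInMeasure μ (fun n => ⇑(s n)) atTop f

/-- `I` is an extension of the simple-map integral to `L(Ω,E)`: it agrees with
the simple integral, is linear on `L(Ω,E)`, and is (sequentially) continuous
for convergence in measure on the closure of each elementary set. -/
def IsIntegralExtension (𝕜 : Type*) {Ω E : Type*} [RCLike 𝕜]
    [MeasurableSpace Ω] [NormedAddCommGroup E] [NormedSpace 𝕜 E]
    [NormedSpace ℝ E] (μ : Measure Ω) (I : (Ω → E) → E) : Prop :=
  (∀ s : SimpleFunc Ω E, I ⇑s = s.integral μ) ∧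
  (∀ f g : Ω → E, MemL μ f → MemL μ g → I (f + g) = I f + I g) ∧
  (∀ (c : 𝕜) (f : Ω → E), MemL μ f → I (c • f) = c • I f) ∧
  (∀ C : Set (SimpleFunc Ω E), Elementary μ C →
    ∀ (s : ℕ → SimpleFunc Ω E) (f : Ω → E), (∀ n, s n ∈ C) → MemL μ f →
      TendstoInMeasure μ (fun n => ⇑(s n)) atTop f →
      Tendsto (fun n => I ⇑(s n)) atTop (𝓝 (I f)))

/-- A set `F` of integrable maps is uniformly integrable iff for every `ε > 0`
there is `δ > 0` such that `∫ ‖f‖ 1_A < ε` whenever `f ∈ F` and `μ A < δ`. -/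
def UnifInt {Ω E : Type*} [MeasurableSpace Ω] [NormedAddCommGroup E]
    (μ : Measure Ω) (F : Set (Ω → E)) : Prop :=
  ∀ ε > (0 : ℝ), ∃ δ > (0 : ℝ), ∀ f ∈ F, ∀ A : Set Ω, MeasurableSet A →
    μ A < ENNReal.ofReal δ → ∫ x in A, ‖f x‖ ∂μ < ε

section Aux

variable {Ω E : Type*} [MeasurableSpace Ω] {μ : Measure Ω} [IsFiniteMeasure μ]
  [NormedAddCommGroup E]

theorem simpleFunc_integrable (s : SimpleFunc Ω E) : Integrable (⇑s) μ :=
  memLp_one_iff_integrable.mp ((s.memLp_top μ).mono_exponent le_top)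

theorem elementary_singleton (s : SimpleFunc Ω E) : Elementary μ ({s} : Set (SimpleFunc Ω E)) := by
  intro ε hε
  obtain ⟨M, hM⟩ := s.exists_forall_norm_le
  set M' := max M 0 with hM'def
  have hM'0 : (0 : ℝ) ≤ M' := le_max_right _ _
  refine ⟨ε / (M' + 1), by positivity, ?_⟩
  rintro t ht A hA hμA
  rw [Set.mem_singleton_iff] at ht
  have h1 : (μ A).toReal < ε / (M' + 1) := ENNReal.toReal_lt_of_lt_ofReal hμA
  have h2 : (0 : ℝ) ≤ (μ A).toReal := ENNReal.toReal_nonneg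
  have h3 : (μ A).toReal * (M' + 1) < ε :=
    (lt_div_iff₀ (by positivity : (0:ℝ) < M' + 1)).mp h1
  calc ∫ x in A, ‖t x‖ ∂μ ≤ ∫ _x in A, M' ∂μ := by
        refine setIntegral_mono ((simpleFunc_integrable t).norm.restrict)
          (integrable_const _) ?_
        intro x
        rw [ht]
        exact le_max_of_le_left (hM x)
    _ = (μ A).toReal * M' := by rw [setIntegral_const, smul_eq_mul, Measure.real]
    _ < ε := by nlinarith

theorem Elementary.add {C₁ C₂ : Set (SimpleFunc Ω E)} (h₁ : Elementary μ C₁)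
    (h₂ : Elementary μ C₂) : Elementary μ (Set.image2 (· + ·) C₁ C₂) := by
  intro ε hε
  obtain ⟨δ₁, hδ₁, H₁⟩ := h₁ (ε / 2) (half_pos hε)
  obtain ⟨δ₂, hδ₂, H₂⟩ := h₂ (ε / 2) (half_pos hε)
  refine ⟨min δ₁ δ₂, lt_min hδ₁ hδ₂, ?_⟩
  rintro t ⟨a, ha, b, hb, rfl⟩ A hA hμA
  have hμ₁ : μ A < ENNReal.ofReal δ₁ :=
    lt_of_lt_of_le hμA (ENNReal.ofReal_le_ofReal (min_le_left _ _))
  have hμ₂ : μ A < ENNReal.ofReal δ₂ :=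
    lt_of_lt_of_le hμA (ENNReal.ofReal_le_ofReal (min_le_right _ _))
  have key : ∫ x in A, ‖(a + b) x‖ ∂μ ≤ ∫ x in A, ‖a x‖ ∂μ + ∫ x in A, ‖b x‖ ∂μ := by
    rw [← integral_add ((simpleFunc_integrable a).norm.restrict)
      ((simpleFunc_integrable b).norm.restrict)]
    refine setIntegral_mono ((simpleFunc_integrable (a + b)).norm.restrict)
      (((simpleFunc_integrable a).norm.add ((simpleFunc_integrable b).norm)).restrict) ?_
    intro x
    simp only [SimpleFunc.coe_add, Pi.add_apply]
    exact norm_add_le _ _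
  have k1 := H₁ a ha A hA hμ₁
  have k2 := H₂ b hb A hA hμ₂
  linarith

theorem Elementary.smul [NormedSpace ℂ E] (c : ℂ) {C : Set (SimpleFunc Ω E)}
    (h : Elementary μ C) : Elementary μ ((fun t => c • t) '' C) := by
  intro ε hε
  obtain ⟨δ, hδ, H⟩ := h (ε / (‖c‖ + 1)) (by positivity)
  refine ⟨δ, hδ, ?_⟩
  rintro t ⟨a, ha, rfl⟩ A hA hμA
  have heq : ∫ x in A, ‖(c • a) x‖ ∂μ = ‖c‖ * ∫ x in A, ‖a x‖ ∂μ := by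
    simp only [SimpleFunc.coe_smul, Pi.smul_apply, norm_smul]
    rw [integral_const_mul]
  rw [heq]
  have h2 := H a ha A hA hμA
  have hI0 : (0 : ℝ) ≤ ∫ x in A, ‖a x‖ ∂μ := integral_nonneg fun x => norm_nonneg _
  have h2' : (∫ x in A, ‖a x‖ ∂μ) * (‖c‖ + 1) < ε :=
    (lt_div_iff₀ (by positivity : (0:ℝ) < ‖c‖ + 1)).mp h2
  nlinarith [norm_nonneg c]

theorem tendstoInMeasure_self (g : Ω → E) :
    TendstoInMeasure μ (fun _ : ℕ => g) atTop g := by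
  rw [tendstoInMeasure_iff_dist]
  intro ε hε
  have h : μ {x | ε ≤ dist (g x) (g x)} = 0 := by
    convert measure_empty (μ := μ)
    ext x
    simp only [Set.mem_setOf_eq, dist_self, Set.mem_empty_iff_false, iff_false]
    exact not_le.mpr hε
  simp only [h]
  exact tendsto_const_nhds

theorem tim_add {f g : ℕ → Ω → E} {F G : Ω → E}
    (hf : TendstoInMeasure μ f atTop F) (hg : TendstoInMeasure μ g atTop G) :
    TendstoInMeasure μ (fun n => f n + g n) atTop (F + G) := by
  rw [tendstoInMeasure_iff_dist] at *
  intro ε hε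
  have h1 := hf (ε / 2) (half_pos hε)
  have h2 := hg (ε / 2) (half_pos hε)
  have hb : ∀ n, μ {x | ε ≤ dist ((f n + g n) x) ((F + G) x)} ≤
      μ {x | ε / 2 ≤ dist (f n x) (F x)} + μ {x | ε / 2 ≤ dist (g n x) (G x)} := by
    intro n
    refine le_trans (measure_mono ?_) (measure_union_le _ _)
    intro x hx
    simp only [Set.mem_setOf_eq, Pi.add_apply] at hx
    simp only [Set.mem_union, Set.mem_setOf_eq]
    by_contra hcon
    push_neg at hcon
    have htri := dist_add_add_le (f n x) (g n x) (F x) (G x)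
    linarith [hcon.1, hcon.2]
  have h0 : Tendsto (fun n => μ {x | ε / 2 ≤ dist (f n x) (F x)} +
      μ {x | ε / 2 ≤ dist (g n x) (G x)}) atTop (𝓝 0) := by
    simpa using h1.add h2
  exact tendsto_of_tendsto_of_tendsto_of_le_of_le tendsto_const_nhds h0
    (fun n => zero_le') hb

theorem tim_smul [NormedSpace ℂ E] (c : ℂ) {f : ℕ → Ω → E} {F : Ω → E}
    (hf : TendstoInMeasure μ f atTop F) :
    TendstoInMeasure μ (fun n => c • f n) atTop (c • F) := by
  rw [tendstoInMeasure_iff_dist] at *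
  intro ε hε
  have h1 := hf (ε / (‖c‖ + 1)) (by positivity)
  refine tendsto_of_tendsto_of_tendsto_of_le_of_le tendsto_const_nhds h1
    (fun n => zero_le') ?_
  intro n
  refine measure_mono ?_
  intro x hx
  simp only [Set.mem_setOf_eq, Pi.smul_apply] at hx
  simp only [Set.mem_setOf_eq]
  rw [dist_smul₀] at hx
  rw [div_le_iff₀ (by positivity : (0:ℝ) < ‖c‖ + 1)]
  nlinarith [dist_nonneg (x := f n x) (y := F x), norm_nonneg c]

theorem Elementary.unifIntegrable {C : Set (SimpleFunc Ω E)} (hC : Elementary μ C)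
    {s : ℕ → SimpleFunc Ω E} (hs : ∀ n, s n ∈ C) :
    UnifIntegrable (fun n => ⇑(s n)) 1 μ := by
  intro ε hε
  obtain ⟨δ, hδ, H⟩ := hC ε hε
  refine ⟨δ / 2, half_pos hδ, fun n A hA hμA => ?_⟩
  have hμA' : μ A < ENNReal.ofReal δ :=
    lt_of_le_of_lt hμA ((ENNReal.ofReal_lt_ofReal_iff hδ).mpr (half_lt_self hδ))
  have h1 : eLpNorm (A.indicator (⇑(s n))) 1 μ
      = ENNReal.ofReal (∫ x in A, ‖s n x‖ ∂μ) := by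
    rw [eLpNorm_indicator_eq_eLpNorm_restrict hA, eLpNorm_one_eq_lintegral_enorm,
      ← ofReal_integral_norm_eq_lintegral_enorm ((simpleFunc_integrable (s n)).restrict)]
  rw [h1]
  exact ENNReal.ofReal_le_ofReal (le_of_lt (H (s n) (hs n) A hA hμA'))

theorem bound_of_elementary {C : Set (SimpleFunc Ω E)} (hC : Elementary μ C)
    {s : ℕ → SimpleFunc Ω E} (hs : ∀ n, s n ∈ C) {f : Ω → E}
    (hfg : TendstoInMeasure μ (fun n => ⇑(s n)) atTop f) :
    ∃ B : ℝ, ∀ n, ∫ x, ‖s n x‖ ∂μ ≤ B := by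
  obtain ⟨δ, hδ, H⟩ := hC 1 one_pos
  have hhalf : (0 : ℝ≥0∞) < ENNReal.ofReal δ / 2 :=
    ENNReal.div_pos (ne_of_gt (ENNReal.ofReal_pos.mpr hδ)) (by norm_num)
  obtain ⟨N, hN⟩ := eventually_atTop.mp (((tendstoInMeasure_iff_dist.mp hfg) 1 one_pos).eventually_lt_const hhalf)
  have main : ∀ n, N ≤ n →
      ∫ x, ‖s n x‖ ∂μ ≤ ∫ x, ‖s N x‖ ∂μ + 4 + 2 * (μ Set.univ).toReal := by
    intro n hn
    set A := {x | (2 : ℝ) ≤ dist (s n x) (s N x)} with hAdef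
    have hA : MeasurableSet A := by
      have : A = ⇑((s n - s N).map norm) ⁻¹' Set.Ici 2 := by
        ext x
        simp [hAdef, dist_eq_norm, SimpleFunc.coe_sub]
      rw [this]
      exact SimpleFunc.measurableSet_preimage _ _
    have hμA : μ A < ENNReal.ofReal δ := by
      have hsub : A ⊆ {x | 1 ≤ dist (s n x) (f x)} ∪ {x | 1 ≤ dist (s N x) (f x)} := by
        intro x hx
        simp only [hAdef, Set.mem_setOf_eq] at hx
        by_contra hcon
        simp only [Set.mem_union, Set.mem_setOf_eq, not_or, not_le] at hcon
        have h3 := dist_triangle (s n x) (f x) (s N x)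
        rw [dist_comm (f x) (s N x)] at h3
        linarith [hcon.1, hcon.2]
      refine lt_of_le_of_lt ((measure_mono hsub).trans (measure_union_le _ _)) ?_
      refine lt_of_lt_of_le (ENNReal.add_lt_add (hN n hn) (hN N le_rfl)) ?_
      rw [ENNReal.add_halves]
    have hInt : Integrable (fun x => ‖s n x - s N x‖) μ :=
      ((simpleFunc_integrable (s n)).sub (simpleFunc_integrable (s N))).norm
    have hsplit : ∫ x, ‖s n x - s N x‖ ∂μ
        = ∫ x in A, ‖s n x - s N x‖ ∂μ + ∫ x in Aᶜ, ‖s n x - s N x‖ ∂μ :=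
      (integral_add_compl hA hInt).symm
    have hA1 : ∫ x in A, ‖s n x - s N x‖ ∂μ ≤ ∫ x in A, ‖s n x‖ ∂μ + ∫ x in A, ‖s N x‖ ∂μ := by
      rw [← integral_add ((simpleFunc_integrable (s n)).norm.restrict)
        ((simpleFunc_integrable (s N)).norm.restrict)]
      refine setIntegral_mono (hInt.restrict)
        (((simpleFunc_integrable (s n)).norm.add ((simpleFunc_integrable (s N)).norm)).restrict) ?_
      intro x
      exact norm_sub_le _ _
    have hA2 : ∫ x in A, ‖s n x - s N x‖ ∂μ < 2 := by
      have k1 := H (s n) (hs n) A hA hμA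
      have k2 := H (s N) (hs N) A hA hμA
      linarith
    have hAc : ∫ x in Aᶜ, ‖s n x - s N x‖ ∂μ ≤ 2 * (μ Set.univ).toReal := by
      calc ∫ x in Aᶜ, ‖s n x - s N x‖ ∂μ ≤ ∫ _x in Aᶜ, (2 : ℝ) ∂μ := by
            refine setIntegral_mono_on (hInt.restrict) (integrable_const _) hA.compl ?_
            intro x hx
            simp only [hAdef, Set.mem_compl_iff, Set.mem_setOf_eq, not_le] at hx
            rw [dist_eq_norm] at hx
            exact le_of_lt hx
        _ = (μ Aᶜ).toReal * 2 := by rw [setIntegral_const, smul_eq_mul, Measure.real]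
        _ ≤ (μ Set.univ).toReal * 2 := by
            have := ENNReal.toReal_mono (measure_ne_top μ _)
              (measure_mono (Set.subset_univ Aᶜ))
            linarith
        _ = 2 * (μ Set.univ).toReal := by ring
    have hnorm : ∫ x, ‖s n x‖ ∂μ ≤ ∫ x, ‖s n x - s N x‖ ∂μ + ∫ x, ‖s N x‖ ∂μ := by
      rw [← integral_add hInt ((simpleFunc_integrable (s N)).norm)]
      refine integral_mono ((simpleFunc_integrable (s n)).norm)
        (hInt.add ((simpleFunc_integrable (s N)).norm)) ?_
      intro x
      have := norm_sub_norm_le (s n x) (s N x)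
      simp only [Pi.add_apply]
      linarith
    linarith
  refine ⟨(∫ x, ‖s N x‖ ∂μ + 4 + 2 * (μ Set.univ).toReal)
    + ∑ k ∈ Finset.range N, ∫ x, ‖s k x‖ ∂μ, fun n => ?_⟩
  have hsum0 : (0 : ℝ) ≤ ∑ k ∈ Finset.range N, ∫ x, ‖s k x‖ ∂μ :=
    Finset.sum_nonneg fun k _ => integral_nonneg fun x => norm_nonneg _
  by_cases hn : N ≤ n
  · have := main n hn
    linarith
  · push_neg at hn
    have h1 : ∫ x, ‖s n x‖ ∂μ ≤ ∑ k ∈ Finset.range N, ∫ x, ‖s k x‖ ∂μ :=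
      Finset.single_le_sum (f := fun k => ∫ x, ‖s k x‖ ∂μ)
        (fun k _ => integral_nonneg fun x => norm_nonneg _) (Finset.mem_range.mpr hn)
    have h0 : (0 : ℝ) ≤ ∫ x, ‖s N x‖ ∂μ := integral_nonneg fun x => norm_nonneg _
    have h0' : (0 : ℝ) ≤ (μ Set.univ).toReal := ENNReal.toReal_nonneg
    linarith

theorem integrable_of_memL {f : Ω → E} (hf : MemL μ f) : Integrable f μ := by
  obtain ⟨C, hC, s, hs, hfg⟩ := hf
  obtain ⟨B, hB⟩ := bound_of_elementary hC hs hfg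
  obtain ⟨ns, hns, hae⟩ := hfg.exists_seq_tendsto_ae
  have hmeas : AEStronglyMeasurable f μ :=
    aestronglyMeasurable_of_tendsto_ae atTop
      (fun i => (s (ns i)).aestronglyMeasurable) hae
  refine ⟨hmeas, (hasFiniteIntegral_def f μ).mpr ?_⟩
  have hle : ∫⁻ a, ‖f a‖₊ ∂μ ≤ ENNReal.ofReal B := by
    have h1 : ∀ᵐ a ∂μ, (‖f a‖₊ : ℝ≥0∞)
        = liminf (fun i => (‖s (ns i) a‖₊ : ℝ≥0∞)) atTop := by
      filter_upwards [hae] with a ha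
      exact ((ENNReal.continuous_coe.tendsto _).comp
        ((continuous_nnnorm.tendsto _).comp ha)).liminf_eq.symm
    calc ∫⁻ a, ‖f a‖₊ ∂μ
        = ∫⁻ a, liminf (fun i => (‖s (ns i) a‖₊ : ℝ≥0∞)) atTop ∂μ := lintegral_congr_ae h1
      _ ≤ liminf (fun i => ∫⁻ a, ‖s (ns i) a‖₊ ∂μ) atTop :=
          lintegral_liminf_le' fun i => (s (ns i)).aestronglyMeasurable.enorm
      _ ≤ liminf (fun _ : ℕ => ENNReal.ofReal B) atTop := by
          refine liminf_le_liminf (Eventually.of_forall fun i => ?_)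
          rw [show (∫⁻ a, (‖s (ns i) a‖₊ : ℝ≥0∞) ∂μ) = ∫⁻ a, ‖s (ns i) a‖ₑ ∂μ from rfl,
            ← ofReal_integral_norm_eq_lintegral_enorm (simpleFunc_integrable (s (ns i)))]
          exact ENNReal.ofReal_le_ofReal (hB _)
      _ = ENNReal.ofReal B := liminf_const _
  exact lt_of_le_of_lt hle ENNReal.ofReal_lt_top

theorem key_tendsto [NormedSpace ℝ E] [CompleteSpace E] {C : Set (SimpleFunc Ω E)}
    (hC : Elementary μ C) {s : ℕ → SimpleFunc Ω E} (hs : ∀ n, s n ∈ C) {f : Ω → E}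
    (hf : Integrable f μ) (hfg : TendstoInMeasure μ (fun n => ⇑(s n)) atTop f) :
    Tendsto (fun n => ∫ x, s n x ∂μ) atTop (𝓝 (∫ x, f x ∂μ)) := by
  have hui := hC.unifIntegrable hs
  have hLp := tendsto_Lp_finite_of_tendstoInMeasure (p := 1) le_rfl ENNReal.one_ne_top
    (fun n => (s n).aestronglyMeasurable) (memLp_one_iff_integrable.mpr hf) hui hfg
  exact tendsto_integral_of_L1' f hf.aestronglyMeasurable
    (Eventually.of_forall fun n => simpleFunc_integrable _) hLp

end Aux

/-- `L(Ω,E)` is a vector space containing the simple maps, and there is a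
unique linear extension of the simple integral to `L(Ω,E)` which is continuous
(for convergence in measure) on the closure of each elementary set. -/
theorem stmt12 {Ω E : Type*} [MeasurableSpace Ω] (μ : Measure Ω)
    [IsFiniteMeasure μ] [NormedAddCommGroup E] [NormedSpace ℂ E]
    [CompleteSpace E] [TopologicalSpace.SeparableSpace E] :
    (∀ s : SimpleFunc Ω E, MemL μ ⇑s) ∧
    (∀ f g : Ω → E, MemL μ f → MemL μ g → MemL μ (f + g)) ∧
    (∀ (c : ℂ) (f : Ω → E), MemL μ f → MemL μ (c • f)) ∧
    (∃ I : (Ω → E) → E, IsIntegralExtension ℂ μ I) ∧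
    (∀ I₁ I₂ : (Ω → E) → E, IsIntegralExtension ℂ μ I₁ →
      IsIntegralExtension ℂ μ I₂ → ∀ f : Ω → E, MemL μ f → I₁ f = I₂ f) := by
  refine ⟨?_, ?_, ?_, ?_, ?_⟩
  · intro s
    exact ⟨{s}, elementary_singleton s, fun _ => s, fun _ => rfl, tendstoInMeasure_self ⇑s⟩
  · rintro f g ⟨C₁, hC₁, s₁, hs₁, h₁⟩ ⟨C₂, hC₂, s₂, hs₂, h₂⟩
    refine ⟨Set.image2 (· + ·) C₁ C₂, hC₁.add hC₂, fun n => s₁ n + s₂ n,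
      fun n => Set.mem_image2_of_mem (hs₁ n) (hs₂ n), ?_⟩
    simpa only [SimpleFunc.coe_add] using tim_add h₁ h₂
  · rintro c f ⟨C, hC, s, hs, h⟩
    refine ⟨(fun t => c • t) '' C, hC.smul c, fun n => c • s n,
      fun n => Set.mem_image_of_mem _ (hs n), ?_⟩
    simpa only [SimpleFunc.coe_smul] using tim_smul c h
  · refine ⟨fun h => ∫ x, h x ∂μ, ?_, ?_, ?_, ?_⟩
    · exact fun s => (SimpleFunc.integral_eq_integral s (simpleFunc_integrable s)).symm
    · intro f g hf hg
      show ∫ x, f x + g x ∂μ = _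
      exact integral_add (integrable_of_memL hf) (integrable_of_memL hg)
    · intro c f hf
      show ∫ x, c • f x ∂μ = _
      exact integral_smul c f
    · intro C hC s f hs hf hfg
      exact key_tendsto hC hs (integrable_of_memL hf) hfg
  · intro I₁ I₂ h₁ h₂ f hf
    obtain ⟨C, hC, s, hs, hfg⟩ := hf
    have t₁ := h₁.2.2.2 C hC s f hs ⟨C, hC, s, hs, hfg⟩ hfg
    have t₂ := h₂.2.2.2 C hC s f hs ⟨C, hC, s, hs, hfg⟩ hfg
    have he : ∀ n, I₁ ⇑(s n) = I₂ ⇑(s n) := fun n =>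
      (h₁.1 (s n)).trans (h₂.1 (s n)).symm
    have t₁' : Tendsto (fun n => I₂ ⇑(s n)) atTop (𝓝 (I₁ f)) := by
      simpa only [he] using t₁
    exact tendsto_nhds_unique t₁' t₂
end
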